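/- Let T ⊆ F, s : T → Z_{≥0}, N = Σ_{a∈T} s(a), e a degree bound, and h : T → F[z] with deg h_a < s(a). Then there is at most one polynomial R ∈ F[x] of degree at most e with Δ_mult^(s)(h, Enc^(s)(R)) < (1/2)(N − e). -/

import Mathlib

open Polynomial Classical

/-- `agr sa p` is the order of agreement capped at `sa`: the minimum of `sa` and the
multiplicity of `0` as a root of `p` (equal to `sa` when `p = 0`). -/
noncomputable def agr {F : Type*} [CommRing F] (sa : ℕ) (p : Polynomial F) : ℕ :=
  if p = 0 then sa else min sa (p.rootMultiplicity 0)

/-- The pointwise multiplicity distance `s(a) − min(u_a, s(a))`. -/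
noncomputable def mdist {F : Type*} [CommRing F] (sa : ℕ) (p : Polynomial F) : ℕ :=
  sa - agr sa p

lemma agr_le {F : Type*} [CommRing F] (sa : ℕ) (p : Polynomial F) : agr sa p ≤ sa := by
  unfold agr; split
  · exact le_rfl
  · exact min_le_left _ _

lemma X_pow_agr_dvd {F : Type*} [CommRing F] (sa : ℕ) (p : Polynomial F) :
    X ^ agr sa p ∣ p := by
  unfold agr; split
  · simp [*]
  · refine dvd_trans (pow_dvd_pow X (min_le_right sa _)) ?_
    have := Polynomial.pow_rootMultiplicity_dvd p (0 : F)
    simpa using this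

/-- Uniqueness of decoding for univariate multiplicity codes with varying multiplicities:
at most one polynomial of degree at most `e` lies within multiplicity distance `(N - e)/2`
of a given received word. -/
theorem unique_decoding_varying_multiplicities {F : Type*} [Field F]
    (T : Finset F) (s : F → ℕ) (e N : ℕ) (hN : N = ∑ a ∈ T, s a)
    (h : F → Polynomial F)
    (hdeg : ∀ a ∈ T, (h a).degree < (s a : WithBot ℕ))
    (R₁ R₂ : Polynomial F) (hR₁ : R₁.natDegree ≤ e) (hR₂ : R₂.natDegree ≤ e)
    (hclose₁ : ((∑ a ∈ T, mdist (s a) (h a - R₁.comp (X + C a)) : ℕ) : ℚ) <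
      ((N : ℚ) - (e : ℚ)) / 2)
    (hclose₂ : ((∑ a ∈ T, mdist (s a) (h a - R₂.comp (X + C a)) : ℕ) : ℚ) <
      ((N : ℚ) - (e : ℚ)) / 2) :
    R₁ = R₂ := by
  by_contra hne
  set D := R₁ - R₂ with hD
  have hD0 : D ≠ 0 := sub_ne_zero.mpr hne
  set m : F → ℕ := fun a =>
    min (agr (s a) (h a - R₁.comp (X + C a))) (agr (s a) (h a - R₂.comp (X + C a))) with hm
  -- divisibility: (X - C a) ^ m a ∣ D for a ∈ T
  have hdvd : ∀ a ∈ T, (X - C a) ^ m a ∣ D := by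
    intro a _
    have h1 : X ^ m a ∣ (h a - R₁.comp (X + C a)) :=
      dvd_trans (pow_dvd_pow X (min_le_left _ _)) (X_pow_agr_dvd _ _)
    have h2 : X ^ m a ∣ (h a - R₂.comp (X + C a)) :=
      dvd_trans (pow_dvd_pow X (min_le_right _ _)) (X_pow_agr_dvd _ _)
    have h3 : X ^ m a ∣ D.comp (X + C a) := by
      have : D.comp (X + C a) =
          (h a - R₂.comp (X + C a)) - (h a - R₁.comp (X + C a)) := by
        rw [hD, sub_comp]; ring
      rw [this]
      exact dvd_sub h2 h1
    obtain ⟨c, hc⟩ := h3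
    have key : D = (X - C a) ^ m a * c.comp (X - C a) := by
      have := congrArg (fun p => Polynomial.comp p (X - C a)) hc
      simp only [mul_comp, pow_comp, X_comp] at this
      rw [Polynomial.comp_assoc] at this
      simpa using this
    exact ⟨c.comp (X - C a), key⟩
  have hprod : (∏ a ∈ T, (X - C a) ^ m a) ∣ D := by
    refine Finset.prod_dvd_of_coprime ?_ hdvd
    intro a ha b hb hab
    exact (Polynomial.pairwise_coprime_X_sub_C Function.injective_id hab).pow
  have hdegprod : (∏ a ∈ T, (X - C a) ^ m a).natDegree = ∑ a ∈ T, m a := by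
    rw [Polynomial.natDegree_prod]
    · exact Finset.sum_congr rfl fun a _ => by
        rw [natDegree_pow, natDegree_X_sub_C, mul_one]
    · intro a _
      exact pow_ne_zero _ (X_sub_C_ne_zero a)
  have hle : ∑ a ∈ T, m a ≤ e := by
    have := Polynomial.natDegree_le_of_dvd hprod hD0
    rw [hdegprod] at this
    exact this.trans ((natDegree_sub_le _ _).trans (by omega : max R₁.natDegree R₂.natDegree ≤ e))
  -- arithmetic contradiction
  set d₁ := ∑ a ∈ T, mdist (s a) (h a - R₁.comp (X + C a)) with hd₁
  set d₂ := ∑ a ∈ T, mdist (s a) (h a - R₂.comp (X + C a)) with hd₂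
  have hsum : N ≤ ∑ a ∈ T, m a + (d₁ + d₂) := by
    rw [hN, hd₁, hd₂, ← Finset.sum_add_distrib, ← Finset.sum_add_distrib]
    refine Finset.sum_le_sum fun a _ => ?_
    have g1 := agr_le (s a) (h a - R₁.comp (X + C a))
    have g2 := agr_le (s a) (h a - R₂.comp (X + C a))
    simp only [hm, mdist]
    omega
  have hq : (d₁ : ℚ) + d₂ < (N : ℚ) - e := by linarith
  have hn : d₁ + d₂ + e < N := by
    have hq' : (d₁ : ℚ) + (d₂ : ℚ) + (e : ℚ) < (N : ℚ) := by linarith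
    exact_mod_cast hq'
  omega
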